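/- arXiv:2301.07831 — 2 statements merged into one kernel-verified Lean document; each statement's English description precedes it below -/
import Mathlib

section
/- Let Ψ be a real symmetric n×n matrix, e a vector in ℝⁿ, and t a real number. The block matrix [[Ψ, e], [eᵀ, t]] is positive semidefinite if and only if Ψ is positive semidefinite, Ψ Ψ† e = e, and t ≥ eᵀ Ψ† e. -/
open Matrix

/-- The four Penrose conditions characterizing the Moore–Penrose pseudo-inverse. -/
def IsMoorePenrose {n : Type*} [Fintype n] (A Ad : Matrix n n ℝ) : Prop :=
  A * Ad * A = A ∧ Ad * A * Ad = Ad ∧ (A * Ad)ᵀ = A * Ad ∧ (Ad * A)ᵀ = Ad * A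

/-- The block matrix [[Ψ, e], [eᵀ, t]] is positive semidefinite iff Ψ ⪰ 0,
Ψ Ψ† e = e, and t ≥ eᵀ Ψ† e. -/
theorem bordered_psd_iff {n : ℕ} (Ψ Ψd : Matrix (Fin n) (Fin n) ℝ) (e : Fin n → ℝ) (t : ℝ)
    (hΨ : Ψ.IsSymm) (hd : IsMoorePenrose Ψ Ψd) :
    (Matrix.fromBlocks Ψ (Matrix.replicateCol (Fin 1) e) (Matrix.replicateRow (Fin 1) e)
        (Matrix.of fun _ _ => t)).PosSemidef ↔
      Ψ.PosSemidef ∧ (Ψ * Ψd) *ᵥ e = e ∧ e ⬝ᵥ Ψd *ᵥ e ≤ t := by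
  obtain ⟨h1, h2, h3, h4⟩ := hd
  have hΨt : Ψᵀ = Ψ := hΨ
  have quad : ∀ (y : Fin n → ℝ) (s : ℝ),
      (Sum.elim y (fun _ => s)) ⬝ᵥ (Matrix.fromBlocks Ψ (Matrix.replicateCol (Fin 1) e)
        (Matrix.replicateRow (Fin 1) e) (Matrix.of fun _ _ => t)) *ᵥ (Sum.elim y (fun _ => s)) =
        y ⬝ᵥ Ψ *ᵥ y + s * (y ⬝ᵥ e) + s * (e ⬝ᵥ y) + t * (s * s) := by
    intro y s
    simp [fromBlocks_mulVec, sumElim_dotProduct_sumElim, dotProduct, mulVec,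
      Fin.sum_univ_one, Finset.mul_sum, Finset.sum_add_distrib, mul_add, add_mul]
    ring_nf
  have fact1 : Ψ * (Ψ * Ψd) = Ψ := by
    have h' : (Ψ * (Ψ * Ψd))ᵀ = Ψ := by
      rw [transpose_mul, h3, hΨt, h1]
    calc Ψ * (Ψ * Ψd) = ((Ψ * (Ψ * Ψd))ᵀ)ᵀ := (transpose_transpose _).symm
      _ = Ψᵀ := by rw [h']
      _ = Ψ := hΨt
  have fact2 : (Ψ * Ψd) * (Ψ * Ψd) = Ψ * Ψd := by
    rw [← mul_assoc, h1]
  constructor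
  · intro hP; obtain ⟨hherm, hq⟩ := posSemidef_iff_dotProduct_mulVec.mp hP
    have hq' : ∀ (y : Fin n → ℝ) (s : ℝ),
        0 ≤ y ⬝ᵥ Ψ *ᵥ y + s * (y ⬝ᵥ e) + s * (e ⬝ᵥ y) + t * (s * s) := by
      intro y s
      rw [← quad y s]
      simpa using hq (Sum.elim y fun _ => s)
    have hpsd : Ψ.PosSemidef := by
      refine posSemidef_iff_dotProduct_mulVec.mpr ⟨?_, ?_⟩
      · show Ψᴴ = Ψ
        rw [show Ψᴴ = Ψᵀ from by ext i j; simp [conjTranspose_apply], hΨt]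
      · intro x
        have := hq' x 0
        simpa using this
    set r := e - (Ψ * Ψd) *ᵥ e with hr
    have hΨr : Ψ *ᵥ r = 0 := by
      rw [hr, mulVec_sub, mulVec_mulVec, fact1, sub_self]
    have hPr : (Ψ * Ψd) *ᵥ r = 0 := by
      rw [hr, mulVec_sub, mulVec_mulVec, fact2, sub_self]
    have her : e ⬝ᵥ r = r ⬝ᵥ r := by
      have he' : e = r + (Ψ * Ψd) *ᵥ e := by rw [hr]; abel
      have hPe : ((Ψ * Ψd) *ᵥ e) ⬝ᵥ r = e ⬝ᵥ ((Ψ * Ψd) *ᵥ r) := by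
        rw [dotProduct_comm]
        rw [dotProduct_mulVec, ← mulVec_transpose, h3]
        exact dotProduct_comm _ _
      calc e ⬝ᵥ r = (r + (Ψ * Ψd) *ᵥ e) ⬝ᵥ r := by rw [← he']
        _ = r ⬝ᵥ r + ((Ψ * Ψd) *ᵥ e) ⬝ᵥ r := add_dotProduct _ _ _
        _ = r ⬝ᵥ r := by rw [hPe, hPr, dotProduct_zero, add_zero]
    have hr0 : r = 0 := by
      rw [← dotProduct_self_eq_zero (v := r)]
      by_contra hne
      have hnn : 0 ≤ r ⬝ᵥ r := Finset.sum_nonneg fun i _ => mul_self_nonneg _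
      have hpos : 0 < r ⬝ᵥ r := lt_of_le_of_ne hnn (Ne.symm hne)
      set c : ℝ := (t + 1) / (2 * (r ⬝ᵥ r)) with hc
      have key := hq' (-(c • r)) 1
      have e1 : Ψ *ᵥ (-(c • r)) = 0 := by
        rw [mulVec_neg, mulVec_smul, hΨr, smul_zero, neg_zero]
      rw [e1, dotProduct_zero] at key
      have e2 : (-(c • r)) ⬝ᵥ e = -(c * (r ⬝ᵥ e)) := by
        rw [neg_dotProduct, smul_dotProduct, smul_eq_mul]
      have e3 : e ⬝ᵥ (-(c • r)) = -(c * (e ⬝ᵥ r)) := by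
        rw [dotProduct_neg, dotProduct_smul, smul_eq_mul]
      rw [e2, e3, her, dotProduct_comm r e, her] at key
      have hcrr : c * (r ⬝ᵥ r) = (t + 1) / 2 := by
        rw [hc]; field_simp
      rw [hcrr] at key
      linarith
    have he : (Ψ * Ψd) *ᵥ e = e := (sub_eq_zero.mp hr0).symm
    refine ⟨hpsd, he, ?_⟩
    have key := hq' (-(Ψd *ᵥ e)) 1
    have e1 : Ψ *ᵥ (-(Ψd *ᵥ e)) = -e := by
      rw [mulVec_neg, mulVec_mulVec, he]
    rw [e1] at key
    simp only [dotProduct_neg, neg_dotProduct, neg_neg, one_mul, mul_one] at key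
    have hcomm : (Ψd *ᵥ e) ⬝ᵥ e = e ⬝ᵥ (Ψd *ᵥ e) := dotProduct_comm _ _
    linarith
  · rintro ⟨hpsd, he, ht⟩
    refine posSemidef_iff_dotProduct_mulVec.mpr ⟨?_, ?_⟩
    · show _ᴴ = _
      have htriv : ∀ (m k : Type) [Fintype m] [Fintype k] (A : Matrix m k ℝ), Aᴴ = Aᵀ := by
        intro m k _ _ A; ext i j; simp [conjTranspose_apply]
      have hot : (Matrix.of fun (_ : Fin 1) (_ : Fin 1) => t)ᵀ = Matrix.of fun _ _ => t := by
        ext i j; rfl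
      rw [htriv, fromBlocks_transpose, transpose_replicateCol, transpose_replicateRow, hΨt, hot]
    · intro x
      have hx : x = Sum.elim (x ∘ Sum.inl) (fun _ => x (Sum.inr 0)) := by
        funext i
        cases i with
        | inl j => rfl
        | inr j => rw [Sum.elim_inr, Subsingleton.elim j 0]
      have hstar : star x = x := by
        funext i; simp
      rw [hstar, hx, quad]
      set y := x ∘ Sum.inl with hy
      set s := x (Sum.inr 0) with hs
      set w := Ψd *ᵥ e with hw
      have hΨw : Ψ *ᵥ w = e := by rw [hw, mulVec_mulVec, he]
      have hwy : w ⬝ᵥ (Ψ *ᵥ y) = e ⬝ᵥ y := by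
        rw [dotProduct_mulVec, ← mulVec_transpose, hΨt, hΨw]
      have hew : e ⬝ᵥ w ≤ t := ht
      have key : y ⬝ᵥ Ψ *ᵥ y + s * (y ⬝ᵥ e) + s * (e ⬝ᵥ y) + t * (s * s)
          = (y + s • w) ⬝ᵥ Ψ *ᵥ (y + s • w) + (t - e ⬝ᵥ w) * (s * s) := by
        have expand : (y + s • w) ⬝ᵥ Ψ *ᵥ (y + s • w) =
            y ⬝ᵥ Ψ *ᵥ y + s * (w ⬝ᵥ (Ψ *ᵥ y)) + s * (y ⬝ᵥ (Ψ *ᵥ w))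
              + (s * s) * (w ⬝ᵥ (Ψ *ᵥ w)) := by
          simp only [mulVec_add, mulVec_smul, add_dotProduct, smul_dotProduct,
            dotProduct_add, dotProduct_smul, smul_eq_mul]
          ring
        rw [expand, hwy, hΨw, dotProduct_comm w e]
        ring
      rw [key]
      have hq1 : 0 ≤ (y + s • w) ⬝ᵥ Ψ *ᵥ (y + s • w) := by
        have := hpsd.dotProduct_mulVec_nonneg (y + s • w)
        simpa using this
      have hq2 : 0 ≤ (t - e ⬝ᵥ w) * (s * s) :=
        mul_nonneg (by linarith) (mul_self_nonneg s)
      linarith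
end

section
/- Let groups Gₖ ⊆ {1,...,ℓ} with restriction matrices Rₖ and positive definite Cₖ, and suppose the sample counts nₖ ≥ 0 satisfy nₖ > 0 for at least one group containing index 1. Then e₁ lies in the column space of Ψ(n) = Σₖ nₖ Rₖᵀ Cₖ⁻¹ Rₖ, and hence Ψ(n) Ψ(n)† e₁ = e₁. -/
open Matrix

/-- The restriction matrix of a group `S ⊆ {1,…,ℓ}`: its rows are the standard basis row
vectors `eᵢᵀ` for `i ∈ S`. -/
def restr {l : ℕ} (S : Finset (Fin l)) : Matrix S (Fin l) ℝ :=
  Matrix.of fun i j => if (i : Fin l) = j then 1 else 0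

lemma restr_mulVec {l : ℕ} (S : Finset (Fin l)) (v : Fin l → ℝ) (i : S) :
    (restr S *ᵥ v) i = v i := by
  simp [restr, mulVec, dotProduct, ite_mul]

lemma sum_mulVec' {m n ι : Type*} [Fintype n] (s : Finset ι)
    (A : ι → Matrix m n ℝ) (v : n → ℝ) :
    (∑ k ∈ s, A k) *ᵥ v = ∑ k ∈ s, A k *ᵥ v := by
  funext i
  simp only [mulVec, dotProduct, Finset.sum_apply, Matrix.sum_apply, Finset.sum_mul]
  rw [Finset.sum_comm]

lemma dotProduct_sum' {n ι : Type*} [Fintype n] (s : Finset ι)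
    (v : n → ℝ) (w : ι → n → ℝ) :
    v ⬝ᵥ (∑ k ∈ s, w k) = ∑ k ∈ s, v ⬝ᵥ w k := by
  simp only [dotProduct, Finset.sum_apply, Finset.mul_sum]
  rw [Finset.sum_comm]

/-- If the high-fidelity index (the first index) belongs to some group with positive
sample count, then `e₁` lies in the column space of `Ψ(n)` and `Ψ(n) Ψ(n)† e₁ = e₁`. -/
theorem e1_in_col_space_of_sampled {l K : ℕ} (G : Fin K → Finset (Fin (l + 1)))
    (C : (k : Fin K) → Matrix (G k) (G k) ℝ) (hC : ∀ k, (C k).PosDef)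
    (n : Fin K → ℝ) (hn : ∀ k, 0 ≤ n k)
    (Ψd : Matrix (Fin (l + 1)) (Fin (l + 1)) ℝ)
    (hΨd : IsMoorePenrose (∑ k, n k • ((restr (G k))ᵀ * (C k)⁻¹ * restr (G k))) Ψd)
    (hsampled : ∃ k, 0 < n k ∧ (0 : Fin (l + 1)) ∈ G k) :
    (∃ x : Fin (l + 1) → ℝ,
        (∑ k, n k • ((restr (G k))ᵀ * (C k)⁻¹ * restr (G k))) *ᵥ x
          = (Pi.single 0 1 : Fin (l + 1) → ℝ)) ∧
      ((∑ k, n k • ((restr (G k))ᵀ * (C k)⁻¹ * restr (G k))) * Ψd) *ᵥ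
          (Pi.single 0 1 : Fin (l + 1) → ℝ) = (Pi.single 0 1 : Fin (l + 1) → ℝ) := by
  set Ψ : Matrix (Fin (l + 1)) (Fin (l + 1)) ℝ :=
    ∑ k, n k • ((restr (G k))ᵀ * (C k)⁻¹ * restr (G k)) with hΨdef
  obtain ⟨hA1, hA2, hA3, hA4⟩ := hΨd
  -- inverses of the C k are Hermitian (= symmetric over ℝ)
  have hCinv : ∀ k, ((C k)⁻¹).PosDef := fun k => (hC k).inv
  have hsym : Ψᵀ = Ψ := by
    rw [hΨdef, transpose_sum]
    refine Finset.sum_congr rfl fun k _ => ?_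
    rw [transpose_smul, transpose_mul, transpose_mul, transpose_transpose]
    have h := (hCinv k).1
    rw [Matrix.IsHermitian, conjTranspose_eq_transpose_of_trivial] at h
    rw [h, Matrix.mul_assoc]
  set e : Fin (l + 1) → ℝ := (Pi.single 0 1 : Fin (l + 1) → ℝ) with he
  set v : Fin (l + 1) → ℝ := e - (Ψ * Ψd) *ᵥ e with hv
  -- Ψ * (Ψ * Ψd) = Ψ
  have hΨP : Ψ * (Ψ * Ψd) = Ψ := by
    have h : Ψᵀ * (Ψ * Ψd)ᵀ = Ψ := by rw [← transpose_mul, hA1, hsym]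
    rwa [hsym, hA3] at h
  have hΨv : Ψ *ᵥ v = 0 := by
    have h : Ψ *ᵥ ((Ψ * Ψd) *ᵥ e) = Ψ *ᵥ e := by
      rw [mulVec_mulVec, hΨP]
    rw [hv, mulVec_sub, h, sub_self]
  -- (Ψ * Ψd) *ᵥ v = 0
  have hPv : (Ψ * Ψd) *ᵥ v = 0 := by
    have : (Ψ * Ψd)ᵀ *ᵥ v = 0 := by
      rw [transpose_mul, hsym, ← mulVec_mulVec, hΨv, mulVec_zero]
    rwa [hA3] at this
  -- quadratic form of v is zero, expand as a sum of nonneg terms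
  have hquad : (0 : ℝ) = ∑ k, n k *
      ((restr (G k) *ᵥ v) ⬝ᵥ ((C k)⁻¹ *ᵥ (restr (G k) *ᵥ v))) := by
    have h0 : v ⬝ᵥ (Ψ *ᵥ v) = 0 := by rw [hΨv, dotProduct_zero]
    rw [← h0, hΨdef, sum_mulVec', dotProduct_sum' _ v _]
    refine Finset.sum_congr rfl fun k _ => ?_
    rw [smul_mulVec, dotProduct_smul, smul_eq_mul]
    congr 1
    rw [← mulVec_mulVec, ← mulVec_mulVec, Matrix.dotProduct_mulVec, vecMul_transpose]
  have hterm_nonneg : ∀ k : Fin K, 0 ≤ n k *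
      ((restr (G k) *ᵥ v) ⬝ᵥ ((C k)⁻¹ *ᵥ (restr (G k) *ᵥ v))) := by
    intro k
    refine mul_nonneg (hn k) ?_
    have := (hCinv k).posSemidef.dotProduct_mulVec_nonneg (restr (G k) *ᵥ v)
    simpa using this
  obtain ⟨k, hk_pos, hk_mem⟩ := hsampled
  -- each term in the zero sum is zero
  have hterm_zero : n k *
      ((restr (G k) *ᵥ v) ⬝ᵥ ((C k)⁻¹ *ᵥ (restr (G k) *ᵥ v))) = 0 := by
    have := (Finset.sum_eq_zero_iff_of_nonneg
      (fun i _ => hterm_nonneg i)).mp hquad.symm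
    exact this k (Finset.mem_univ k)
  have hRv : restr (G k) *ᵥ v = 0 := by
    by_contra hne
    have := (hCinv k).dotProduct_mulVec_pos hne
    simp only [star_trivial] at this
    have : 0 < n k * ((restr (G k) *ᵥ v) ⬝ᵥ ((C k)⁻¹ *ᵥ (restr (G k) *ᵥ v))) :=
      mul_pos hk_pos this
    linarith
  have hv0 : v 0 = 0 := by
    have := congrFun hRv (⟨0, hk_mem⟩ : G k)
    rwa [restr_mulVec] at this
  -- v ⬝ᵥ v = 0, hence v = 0
  have hvzero : v = 0 := by
    rw [← dotProduct_self_eq_zero (v := v)]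
    have h1 : v ⬝ᵥ e = 0 := by
      have h : v ⬝ᵥ e = v 0 := by
        rw [he]
        simp [dotProduct, Pi.single_apply]
      rw [h, hv0]
    have h2 : v ⬝ᵥ ((Ψ * Ψd) *ᵥ e) = 0 := by
      rw [Matrix.dotProduct_mulVec, ← mulVec_transpose, hA3, hPv, zero_dotProduct]
    calc v ⬝ᵥ v = v ⬝ᵥ e - v ⬝ᵥ ((Ψ * Ψd) *ᵥ e) := by
          rw [hv, dotProduct_sub]
    _ = 0 := by rw [h1, h2, sub_zero]
  have hPe : (Ψ * Ψd) *ᵥ e = e := by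
    have := sub_eq_zero.mp (hv ▸ hvzero : e - (Ψ * Ψd) *ᵥ e = 0)
    exact this.symm
  refine ⟨⟨Ψd *ᵥ e, ?_⟩, hPe⟩
  rw [mulVec_mulVec]
  exact hPe
end
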